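/- Let 𝒳 be a nonempty finite set, let P be a probability mass function on 𝒳, and let α ∈ (1,∞). Then the maximum over all probability mass functions Q on 𝒳 of ∑_{x∈𝒳} P(x)·Q(x)^{(α−1)/α} equals (∑_{x∈𝒳} P(x)^α)^{1/α}. -/

import Mathlib

open Real BigOperators

/-- A probability mass function on a finite set: nonnegative and sums to 1. -/
def IsPMF {X : Type} [Fintype X] (P : X → ℝ) : Prop :=
  (∀ x, 0 ≤ P x) ∧ ∑ x, P x = 1

/-- the maximum over all pmfs `Q` on `X` of
`∑ x, P x * Q x ^ ((α-1)/α)` equals `(∑ x, P x ^ α) ^ (1/α)`. -/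
theorem max_tilted_value {X : Type} [Fintype X] [Nonempty X]
    (P : X → ℝ) (hP : IsPMF P) (α : ℝ) (hα : 1 < α) :
    IsGreatest
      {v : ℝ | ∃ Q : X → ℝ, IsPMF Q ∧ v = ∑ x, P x * Q x ^ ((α - 1) / α)}
      ((∑ x, P x ^ α) ^ (1 / α)) := by
  obtain ⟨hPnn, hPsum⟩ := hP
  have hα0 : (0:ℝ) < α := lt_trans one_pos hα
  set S : ℝ := ∑ x, P x ^ α with hS
  have hSnn : 0 ≤ S := Finset.sum_nonneg fun x _ => rpow_nonneg (hPnn x) _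
  have hSpos : 0 < S := by
    rcases lt_or_eq_of_le hSnn with h | h
    · exact h
    · exfalso
      have h0 : ∀ x ∈ Finset.univ, P x ^ α = 0 := by
        intro x _
        have := (Finset.sum_eq_zero_iff_of_nonneg
          (fun x _ => rpow_nonneg (hPnn x) α)).mp h.symm
        exact this x (Finset.mem_univ x)
      have hP0 : ∀ x, P x = 0 := by
        intro x
        have := h0 x (Finset.mem_univ x)
        by_contra hne
        have hpos : 0 < P x := lt_of_le_of_ne (hPnn x) (Ne.symm hne)
        exact absurd this (ne_of_gt (rpow_pos_of_pos hpos α))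
      simp [hP0] at hPsum
  have ht : (α - 1) / α = 1 - 1/α := by field_simp
  constructor
  · -- membership: Q = P^α / S
    refine ⟨fun x => P x ^ α / S, ⟨fun x => div_nonneg (rpow_nonneg (hPnn x) _) hSnn, by
      rw [← Finset.sum_div, ← hS, div_self (ne_of_gt hSpos)]⟩, ?_⟩
    have key : ∀ x, P x * (P x ^ α / S) ^ ((α - 1) / α)
        = P x ^ α / S ^ ((α - 1) / α) := by
      intro x
      rw [div_rpow (rpow_nonneg (hPnn x) _) hSnn, ← Real.rpow_mul (hPnn x)]
      rcases eq_or_lt_of_le (hPnn x) with h | h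
      · have hpos : 0 < α * ((α - 1) / α) := by
          rw [mul_div_cancel₀ _ (ne_of_gt hα0)]; linarith
        rw [← h, Real.zero_rpow (ne_of_gt hα0), Real.zero_rpow (ne_of_gt hpos)]
        simp
      · rw [mul_div_assoc', ← Real.rpow_one_add' (le_of_lt h)
          (by rw [mul_div_cancel₀ _ (ne_of_gt hα0)]; linarith)]
        congr 2
        rw [mul_div_cancel₀ _ (ne_of_gt hα0)]
        ring
    rw [Finset.sum_congr rfl (fun x _ => key x), ← Finset.sum_div, ← hS]
    rw [eq_div_iff (ne_of_gt (rpow_pos_of_pos hSpos _)),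
      ← Real.rpow_add hSpos]
    rw [show 1/α + (α-1)/α = 1 by field_simp; ring, Real.rpow_one]
  · -- upper bound
    rintro v ⟨Q, ⟨hQnn, hQsum⟩, rfl⟩
    have hpq : Real.HolderConjugate α (α / (α - 1)) :=
      Real.HolderConjugate.conjExponent hα
    have := Real.inner_le_Lp_mul_Lq_of_nonneg (s := Finset.univ) hpq
      (f := P) (g := fun x => Q x ^ ((α - 1) / α))
      (fun x _ => hPnn x) (fun x _ => rpow_nonneg (hQnn x) _)
    have hg : ∀ x, (Q x ^ ((α - 1) / α)) ^ (α / (α - 1)) = Q x := by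
      intro x
      rw [← Real.rpow_mul (hQnn x)]
      rw [div_mul_div_comm]
      rw [mul_comm]
      rw [div_self (by nlinarith : (0:ℝ) < α * (α - 1)).ne', Real.rpow_one]
    calc ∑ x, P x * Q x ^ ((α - 1) / α)
        ≤ (∑ x, P x ^ α) ^ (1/α) * (∑ x, (Q x ^ ((α-1)/α)) ^ (α/(α-1))) ^ (1/(α/(α-1))) := this
      _ = (∑ x, P x ^ α) ^ (1/α) := by
          rw [Finset.sum_congr rfl (fun x _ => hg x), hQsum, Real.one_rpow, mul_one]
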